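/- The space L⁰(Ω,S) of S-valued random variables on a complete nonatomic probability space, endowed with the topology of convergence in probability, is path-connected. -/

import Mathlib

open MeasureTheory Filter Topology Set
open scoped ENNReal NNReal

/-- The Ky Fan distance between two `S`-valued random variables on `(Ω, P)`:
`inf {ε > 0 : P{ω : d(X ω, Y ω) ≥ ε} ≤ ε}`. -/
noncomputable def kyFanDist {Ω S : Type*} [MeasurableSpace Ω] [PseudoMetricSpace S]
    (P : Measure Ω) (X Y : Ω → S) : ℝ :=
  sInf {ε : ℝ | 0 < ε ∧ (P {ω | ε ≤ dist (X ω) (Y ω)}).toReal ≤ ε}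

/-- A measure is nonatomic if every set of positive measure contains a measurable
subset of strictly smaller positive measure. -/
def Nonatomic {Ω : Type*} [MeasurableSpace Ω] (P : Measure Ω) : Prop :=
  ∀ A : Set Ω, MeasurableSet A → 0 < P A →
    ∃ B ⊆ A, MeasurableSet B ∧ 0 < P B ∧ P B < P A

/-- A finitely supported measure: a finite convex combination of Dirac measures. -/
def FinitelySupported {S : Type*} [MeasurableSpace S] (μ : Measure S) : Prop :=
  ∃ (n : ℕ) (c : Fin n → ℝ≥0∞) (a : Fin n → S),
    (∑ i, c i) = 1 ∧ μ = ∑ i, c i • Measure.dirac (a i)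

/-- Continuity of a path of random variables with respect to the Ky Fan metric
(equivalently, the topology of convergence in probability). -/
def KyFanContinuousOn {Ω S : Type*} [MeasurableSpace Ω] [PseudoMetricSpace S]
    (P : Measure Ω) (γ : ℝ → Ω → S) (A : Set ℝ) : Prop :=
  ∀ t ∈ A, ∀ ε > 0, ∃ δ > 0, ∀ s ∈ A, |s - t| < δ → kyFanDist P (γ s) (γ t) < ε

/-- Continuity of a path of measures with respect to the Lévy–Prokhorov metric. -/
def LPContinuousOn {S : Type*} [MeasurableSpace S] [PseudoMetricSpace S]
    (α : ℝ → Measure S) (A : Set ℝ) : Prop :=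
  ∀ t ∈ A, ∀ ε > 0, ∃ δ > 0, ∀ s ∈ A, |s - t| < δ → levyProkhorovDist (α s) (α t) < ε

/-- A polygonal path in the space of measures with vertices in `V`: there is a partition
`0 = t₀ < t₁ < ⋯ < t_{n+1} = 1` and vertices `μᵢ ∈ V` such that on `[tᵢ, tᵢ₊₁]` the path
is the affine interpolation of `μᵢ` and `μᵢ₊₁`. -/
def IsPolygonalWithVertices {S : Type*} [MeasurableSpace S] (β : ℝ → Measure S)
    (V : Set (Measure S)) : Prop :=
  ∃ (n : ℕ) (t : Fin (n + 2) → ℝ) (μ : Fin (n + 2) → Measure S),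
    StrictMono t ∧ t 0 = 0 ∧ t (Fin.last (n + 1)) = 1 ∧ (∀ i, μ i ∈ V) ∧
    ∀ (i : Fin (n + 1)), ∀ s ∈ Set.Icc (t i.castSucc) (t i.succ),
      β s = ENNReal.ofReal ((t i.succ - s) / (t i.succ - t i.castSucc)) • μ i.castSucc
        + ENNReal.ofReal ((s - t i.castSucc) / (t i.succ - t i.castSucc)) • μ i.succ

section Aux
variable {Ω : Type*} [MeasurableSpace Ω] (P : Measure Ω) [IsProbabilityMeasure P]

lemma kfpHalf (hna : Nonatomic P) {C : Set Ω} (hC : MeasurableSet C) (h0 : 0 < P C) :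
    ∃ D ⊆ C, MeasurableSet D ∧ 0 < P D ∧ P D ≤ P C * 2⁻¹ := by
  obtain ⟨B, hBC, hBm, hB0, hBlt⟩ := hna C hC h0
  by_cases h : P B ≤ P C * 2⁻¹
  · exact ⟨B, hBC, hBm, hB0, h⟩
  · have hd : P (C \ B) = P C - P B :=
      measure_diff hBC hBm.nullMeasurableSet (measure_ne_top P B)
    refine ⟨C \ B, diff_subset, hC.diff hBm, ?_, ?_⟩
    · rw [hd]; exact tsub_pos_of_lt hBlt
    · rw [hd]
      have h2 : P C * 2⁻¹ < P B := not_le.mp h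
      calc P C - P B ≤ P C - P C * 2⁻¹ := tsub_le_tsub_left h2.le _
        _ = P C * 2⁻¹ := by
            have : P C * 2⁻¹ = P C / 2 := by rw [ENNReal.div_eq_inv_mul, mul_comm]
            rw [this, ENNReal.sub_half (measure_ne_top P C)]

lemma kfpSmall (hna : Nonatomic P) {C : Set Ω} (hC : MeasurableSet C) (h0 : 0 < P C)
    {ε : ℝ≥0∞} (hε : 0 < ε) :
    ∃ D ⊆ C, MeasurableSet D ∧ 0 < P D ∧ P D < ε := by
  have key : ∀ n : ℕ, ∃ D ⊆ C, MeasurableSet D ∧ 0 < P D ∧ P D ≤ 2⁻¹ ^ n := by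
    intro n
    induction n with
    | zero => exact ⟨C, subset_rfl, hC, h0, by simpa using prob_le_one⟩
    | succ n ih =>
      obtain ⟨D, hDC, hDm, hD0, hDle⟩ := ih
      obtain ⟨E, hED, hEm, hE0, hEle⟩ := kfpHalf P hna hDm hD0
      exact ⟨E, hED.trans hDC, hEm, hE0, by
        rw [pow_succ]; exact hEle.trans (by gcongr)⟩
  obtain ⟨n, hn⟩ := ENNReal.exists_inv_two_pow_lt hε.ne'
  obtain ⟨D, hDC, hDm, hD0, hDle⟩ := key n
  exact ⟨D, hDC, hDm, hD0, hDle.trans_lt hn⟩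


lemma kfpSierpinski (hna : Nonatomic P) {A : Set Ω} (hA : MeasurableSet A)
    {r : ℝ≥0∞} (hr : r ≤ P A) : ∃ B ⊆ A, MeasurableSet B ∧ P B = r := by
  classical
  have hrt : r ≠ ∞ := (hr.trans_lt (measure_lt_top P A)).ne
  -- greedy step
  have step : ∀ B : Set Ω, MeasurableSet B → B ⊆ A → P B ≤ r →
      ∃ C : Set Ω, MeasurableSet C ∧ C ⊆ A \ B ∧ P B + P C ≤ r ∧
        ∀ D : Set Ω, MeasurableSet D → D ⊆ A \ B → P B + P D ≤ r → P D ≤ 2 * P C := by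
    intro B hBm hBA hBr
    set δ : ℝ≥0∞ :=
      ⨆ (D : Set Ω) (_ : MeasurableSet D ∧ D ⊆ A \ B ∧ P B + P D ≤ r), P D with hδdef
    have hδle : ∀ D : Set Ω, MeasurableSet D → D ⊆ A \ B → P B + P D ≤ r → P D ≤ δ := by
      intro D h1 h2 h3
      exact le_iSup₂_of_le D ⟨h1, h2, h3⟩ le_rfl
    rcases eq_or_ne δ 0 with h0 | h0
    · refine ⟨∅, MeasurableSet.empty, empty_subset _, by simpa using hBr, ?_⟩
      intro D h1 h2 h3
      have := hδle D h1 h2 h3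
      rw [h0] at this
      simpa using this
    · have hδtop : δ ≠ ∞ := by
        have : δ ≤ r := by
          rw [hδdef]
          refine iSup₂_le fun D hD => ?_
          exact le_trans (le_add_self) hD.2.2
        exact (this.trans_lt hrt.lt_top).ne
      have hlt : δ / 2 < δ := ENNReal.half_lt_self h0 hδtop
      rw [hδdef] at hlt
      obtain ⟨D, hD⟩ := lt_iSup_iff.mp hlt
      obtain ⟨hDp, hDlt⟩ := lt_iSup_iff.mp hD
      refine ⟨D, hDp.1, hDp.2.1, hDp.2.2, ?_⟩
      intro E h1 h2 h3
      have h4 : P E ≤ δ := hδle E h1 h2 h3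
      have h5 : δ ≤ 2 * P D := by
        have : δ / 2 ≤ P D := hDlt.le.trans (le_of_eq rfl) |>.trans le_rfl |>.trans_eq rfl
        rw [ENNReal.div_le_iff_le_mul (Or.inl two_ne_zero) (Or.inl ENNReal.ofNat_ne_top)] at this
        rwa [mul_comm] at this
      exact h4.trans h5
  -- iterate the greedy step
  let T := {B : Set Ω // MeasurableSet B ∧ B ⊆ A ∧ P B ≤ r}
  have base : MeasurableSet (∅ : Set Ω) ∧ (∅ : Set Ω) ⊆ A ∧ P ∅ ≤ r := by
    refine ⟨MeasurableSet.empty, empty_subset _, by simp⟩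
  let nxt : T → T := fun B =>
    ⟨B.1 ∪ (step B.1 B.2.1 B.2.2.1 B.2.2.2).choose, by
      obtain ⟨hCm, hCs, hCr, -⟩ := (step B.1 B.2.1 B.2.2.1 B.2.2.2).choose_spec
      refine ⟨B.2.1.union hCm, union_subset B.2.2.1 (hCs.trans diff_subset), ?_⟩
      exact (measure_union_le _ _).trans hCr⟩
  let F : ℕ → T := fun n => Nat.rec ⟨∅, base⟩ (fun _ B => nxt B) n
  have hFsucc : ∀ n, F (n + 1) = nxt (F n) := fun n => rfl
  -- the chosen pieces
  set C : ℕ → Set Ω := fun n => (step (F n).1 (F n).2.1 (F n).2.2.1 (F n).2.2.2).choose with hC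
  have hCspec : ∀ n, MeasurableSet (C n) ∧ C n ⊆ A \ (F n).1 ∧ P (F n).1 + P (C n) ≤ r ∧
      ∀ D : Set Ω, MeasurableSet D → D ⊆ A \ (F n).1 → P (F n).1 + P D ≤ r → P D ≤ 2 * P (C n) :=
    fun n => (step (F n).1 (F n).2.1 (F n).2.2.1 (F n).2.2.2).choose_spec
  have hFeq : ∀ n, (F (n + 1)).1 = (F n).1 ∪ C n := fun n => rfl
  have hPsucc : ∀ n, P (F (n + 1)).1 = P (F n).1 + P (C n) := by
    intro n
    rw [hFeq n]
    refine measure_union ?_ (hCspec n).1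
    exact Set.disjoint_left.mpr fun ω hω hωC => ((hCspec n).2.1 hωC).2 hω
  have hFmono : Monotone fun n => (F n).1 := by
    refine monotone_nat_of_le_succ fun n => ?_
    rw [hFeq n]; exact subset_union_left
  set Bs : Set Ω := ⋃ n, (F n).1 with hBs
  have hBsm : MeasurableSet Bs := MeasurableSet.iUnion fun n => (F n).2.1
  have hBsA : Bs ⊆ A := iUnion_subset fun n => (F n).2.2.1
  have hBsP : P Bs = ⨆ n, P (F n).1 := hFmono.directed_le.measure_iUnion
  have hBsr : P Bs ≤ r := by rw [hBsP]; exact iSup_le fun n => (F n).2.2.2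
  refine ⟨Bs, hBsA, hBsm, ?_⟩
  by_contra hne
  have hBslt : P Bs < r := lt_of_le_of_ne hBsr hne
  -- find a small piece of A \ Bs
  have hABs : 0 < P (A \ Bs) := by
    rcases eq_or_ne (P (A \ Bs)) 0 with h | h
    · exfalso
      have : P A ≤ P Bs + P (A \ Bs) := by
        refine (measure_mono (fun ω hω => ?_)).trans (measure_union_le _ _)
        by_cases hb : ω ∈ Bs
        · exact Or.inl hb
        · exact Or.inr ⟨hω, hb⟩
      rw [h, add_zero] at this
      exact absurd (hr.trans this) hBslt.not_ge
    · exact pos_iff_ne_zero.mpr h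
  obtain ⟨D, hDs, hDm, hD0, hDlt⟩ :=
    kfpSmall P hna (hA.diff hBsm) hABs (tsub_pos_of_lt hBslt)
  -- D fits above every F n
  have hDok : ∀ n, P D ≤ 2 * P (C n) := by
    intro n
    refine (hCspec n).2.2.2 D hDm (hDs.trans (diff_subset_diff_right (show (F n).1 ⊆ Bs from hBs ▸ subset_iUnion (fun k => (F k).1) n))) ?_
    have h1 : P (F n).1 + P D ≤ P Bs + P D :=
      add_le_add (measure_mono (subset_iUnion (fun n => (F n).1) n)) le_rfl
    have h2 : P Bs + P D < r := lt_tsub_iff_left.mp hDlt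
    exact h1.trans h2.le
  have hgrow : ∀ n : ℕ, (n : ℝ≥0∞) * (P D / 2) ≤ P (F n).1 := by
    intro n
    induction n with
    | zero => simp
    | succ n ih =>
      rw [hPsucc n]
      push_cast
      rw [add_mul, one_mul]
      refine add_le_add ih ?_
      rw [ENNReal.div_le_iff_le_mul (Or.inl two_ne_zero) (Or.inl ENNReal.ofNat_ne_top), mul_comm]
      exact hDok n
  obtain ⟨n, hn⟩ : ∃ n : ℕ, r < n * (P D / 2) := by
    have hc0 : P D / 2 ≠ 0 := by
      simp only [ne_eq, ENNReal.div_eq_zero_iff]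
      push_neg
      exact ⟨hD0.ne', ENNReal.ofNat_ne_top⟩
    obtain ⟨n, hn⟩ := ENNReal.exists_nat_gt (ENNReal.div_lt_top hrt hc0).ne
    exact ⟨n, by rwa [ENNReal.div_lt_iff (Or.inl hc0) (Or.inr hrt)] at hn⟩
  exact absurd ((hn.trans_le (hgrow n)).trans_le (F n).2.2.2) (lt_irrefl r)


def kfpGood (P : Measure Ω) (n : ℕ) (f : ℕ → Set Ω) : Prop :=
  (∀ k, MeasurableSet (f k)) ∧ Monotone f ∧ f 0 = ∅ ∧ (∀ k, 2 ^ n ≤ k → f k = univ) ∧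
    ∀ k ≤ 2 ^ n, P (f k) = (k : ℝ≥0∞) / 2 ^ n

lemma kfpGood_base : kfpGood P 0 (fun k => if k = 0 then ∅ else univ) := by
  refine ⟨fun k => by by_cases h : k = 0 <;> simp [h], ?_, by simp, fun k hk => by
    have : k ≠ 0 := by simp at hk; omega
    simp [this], fun k hk => ?_⟩
  · intro a b hab
    by_cases ha : a = 0
    · simp [ha]
    · have hb : b ≠ 0 := by omega
      simp [ha, hb]
  · interval_cases k
    · simp
    · simp

lemma kfpGood_step (hna : Nonatomic P) (n : ℕ) (f : ℕ → Set Ω) (hf : kfpGood P n f) :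
    ∃ g, kfpGood P (n + 1) g ∧ ∀ k, g (2 * k) = f k := by
  classical
  obtain ⟨hm, hmono, h0, huniv, hmeas⟩ := hf
  have key : ∀ j, j < 2 ^ n → ∃ M ⊆ f (j + 1) \ f j, MeasurableSet M ∧
      P M = 1 / 2 ^ (n + 1) := by
    intro j hj
    have hdm : P (f (j + 1) \ f j) = 1 / 2 ^ n := by
      rw [measure_diff (hmono (Nat.le_succ j)) (hm j).nullMeasurableSet (measure_ne_top P _),
        hmeas _ hj, hmeas _ hj.le]
      push_cast
      rw [ENNReal.add_div, ENNReal.add_sub_cancel_left]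
      exact (ENNReal.div_lt_top (by simp) (by positivity)).ne
    refine kfpSierpinski P hna ((hm (j + 1)).diff (hm j)) ?_
    rw [hdm]
    exact ENNReal.div_le_div_left (pow_le_pow_right₀ one_le_two (Nat.le_succ n)) 1
  set M : ℕ → Set Ω := fun j =>
    if h : j < 2 ^ n then (key j h).choose else univ with hM
  have hMspec : ∀ j (h : j < 2 ^ n), M j ⊆ f (j + 1) \ f j ∧ MeasurableSet (M j) ∧
      P (M j) = 1 / 2 ^ (n + 1) := by
    intro j h
    simp only [hM, dif_pos h]
    exact ⟨(key j h).choose_spec.1, (key j h).choose_spec.2⟩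
  have hMm : ∀ j, MeasurableSet (M j) := by
    intro j
    by_cases h : j < 2 ^ n
    · exact (hMspec j h).2.1
    · simp [hM, dif_neg h]
  set g : ℕ → Set Ω := fun k => if k % 2 = 0 then f (k / 2) else f (k / 2) ∪ M (k / 2) with hg
  have hg2 : ∀ k, g (2 * k) = f k := by
    intro k
    simp [hg, Nat.mul_mod_right, Nat.mul_div_cancel_left _ (two_pos)]
  have hg2' : ∀ k, g (2 * k + 1) = f k ∪ M k := by
    intro k
    have h1 : (2 * k + 1) % 2 = 1 := by omega
    have h2 : (2 * k + 1) / 2 = k := by omega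
    simp [hg, h1, h2]
  refine ⟨g, ⟨?_, ?_, ?_, ?_, ?_⟩, hg2⟩
  · intro k
    by_cases h : k % 2 = 0
    · simpa [hg, h] using hm (k / 2)
    · simpa [hg, h] using (hm (k / 2)).union (hMm (k / 2))
  · -- monotone
    refine monotone_nat_of_le_succ fun k => ?_
    rcases Nat.even_or_odd k with ⟨j, hj⟩ | ⟨j, hj⟩
    · subst hj
      rw [show j + j = 2 * j by ring, hg2, show 2 * j + 1 = 2 * j + 1 from rfl, hg2']
      exact subset_union_left
    · subst hj
      rw [hg2', show 2 * j + 1 + 1 = 2 * (j + 1) by ring, hg2]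
      refine union_subset (hmono (Nat.le_succ j)) ?_
      by_cases h : j < 2 ^ n
      · exact ((hMspec j h).1).trans diff_subset
      · rw [huniv (j + 1) (by omega)]
        exact subset_univ _
  · -- g 0 = ∅
    simpa using (hg2 0).trans h0
  · -- univ
    intro k hk
    have h2 : 2 ^ n ≤ k / 2 := by
      rw [pow_succ] at hk
      omega
    by_cases h : k % 2 = 0
    · simp [hg, h, huniv _ h2]
    · simp [hg, h, huniv _ h2]
  · -- measures
    intro k hk
    rcases Nat.even_or_odd k with ⟨j, hj⟩ | ⟨j, hj⟩
    · have hj' : k = 2 * j := by omega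
      subst hj'
      have hj2 : j ≤ 2 ^ n := by
        rw [pow_succ] at hk; omega
      rw [hg2, hmeas j hj2]
      push_cast
      rw [pow_succ, mul_comm ((2:ℝ≥0∞) ^ n) 2,
        ENNReal.mul_div_mul_left _ _ two_ne_zero ENNReal.ofNat_ne_top]
    · have hj' : k = 2 * j + 1 := by omega
      subst hj'
      have hj2 : j < 2 ^ n := by
        rw [pow_succ] at hk; omega
      obtain ⟨hMsub, hMmj, hMP⟩ := hMspec j hj2
      rw [hg2']
      have hdisj : Disjoint (f j) (M j) :=
        Set.disjoint_left.mpr fun ω hω hωM => (hMsub hωM).2 hω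
      rw [measure_union hdisj hMmj, hmeas j hj2.le, hMP]
      have e1 : (j : ℝ≥0∞) / 2 ^ n = (2 * j : ℝ≥0∞) / 2 ^ (n + 1) := by
        rw [pow_succ, mul_comm ((2:ℝ≥0∞) ^ n) 2,
          ENNReal.mul_div_mul_left _ _ two_ne_zero ENNReal.ofNat_ne_top]
      rw [e1, ENNReal.div_add_div_same]
      push_cast
      ring_nf


lemma kfpFamily (hna : Nonatomic P) : ∃ F : ℕ → ℕ → Set Ω,
    (∀ n, kfpGood P n (F n)) ∧ ∀ n k, F (n + 1) (2 * k) = F n k := by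
  classical
  let F : ∀ n : ℕ, {f : ℕ → Set Ω // kfpGood P n f} := fun n =>
    Nat.rec ⟨_, kfpGood_base P⟩
      (fun m fp => ⟨(kfpGood_step P hna m fp.1 fp.2).choose,
        (kfpGood_step P hna m fp.1 fp.2).choose_spec.1⟩) n
  refine ⟨fun n => (F n).1, fun n => (F n).2, fun n k => ?_⟩
  exact (kfpGood_step P hna n (F n).1 (F n).2).choose_spec.2 k


lemma kfpMonotoneFamily (hna : Nonatomic P) : ∃ A : ℝ → Set Ω,
    (∀ t, MeasurableSet (A t)) ∧ (∀ s t : ℝ, 0 ≤ s → s ≤ t → A s ⊆ A t) ∧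
    A 0 = ∅ ∧ A 1 = univ ∧ ∀ t ∈ Icc (0:ℝ) 1, P (A t) = ENNReal.ofReal t := by
  obtain ⟨F, hF, hFc⟩ := kfpFamily P hna
  refine ⟨fun t => ⋃ n, F n ⌊t * 2 ^ n⌋₊, fun t => MeasurableSet.iUnion fun n => (hF n).1 _,
    ?_, ?_, ?_, ?_⟩
  · intro s t hs hst
    refine iUnion_mono fun n => (hF n).2.1 (Nat.floor_mono ?_)
    exact mul_le_mul_of_nonneg_right hst (by positivity)
  · simp only [zero_mul, Nat.floor_zero]
    simp [(fun n => (hF n).2.2.1 : ∀ n, F n 0 = ∅)]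
  · refine eq_univ_of_univ_subset ?_
    have h0 : F 0 ⌊(1:ℝ) * 2 ^ 0⌋₊ = univ := by
      norm_num
      exact (hF 0).2.2.2.1 1 le_rfl
    rw [← h0]
    exact subset_iUnion (fun n => F n ⌊(1:ℝ) * 2 ^ n⌋₊) 0
  · intro t ht
    have hfl : ∀ n : ℕ, ⌊t * 2 ^ n⌋₊ ≤ 2 ^ n := by
      intro n
      have : t * 2 ^ n ≤ ((2 ^ n : ℕ) : ℝ) := by
        push_cast
        nlinarith [ht.2, (by positivity : (0:ℝ) < (2:ℝ) ^ n)]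
      exact (Nat.floor_le_of_le this).trans (by simp)
    have hchain : Monotone fun n => F n ⌊t * 2 ^ n⌋₊ := by
      refine monotone_nat_of_le_succ fun n => ?_
      rw [← hFc n ⌊t * 2 ^ n⌋₊]
      refine (hF (n + 1)).2.1 ?_
      refine Nat.le_floor ?_
      push_cast
      have h1 : (⌊t * 2 ^ n⌋₊ : ℝ) ≤ t * 2 ^ n :=
        Nat.floor_le (mul_nonneg ht.1 (by positivity))
      have h2 : t * 2 ^ (n + 1) = 2 * (t * 2 ^ n) := by ring
      linarith
    rw [hchain.directed_le.measure_iUnion]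
    have hval : ∀ n, P (F n ⌊t * 2 ^ n⌋₊) = ((⌊t * 2 ^ n⌋₊ : ℝ≥0∞)) / 2 ^ n :=
      fun n => (hF n).2.2.2.2 _ (hfl n)
    have hmono : Monotone fun n => P (F n ⌊t * 2 ^ n⌋₊) :=
      fun a b hab => measure_mono (hchain hab)
    refine tendsto_nhds_unique (tendsto_atTop_iSup hmono) ?_
    have heq : ∀ n, P (F n ⌊t * 2 ^ n⌋₊) = ENNReal.ofReal ((⌊t * 2 ^ n⌋₊ : ℝ) / 2 ^ n) := by
      intro n
      rw [hval n, ENNReal.ofReal_div_of_pos (by positivity), ENNReal.ofReal_natCast,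
        ENNReal.ofReal_pow (by norm_num : (0:ℝ) ≤ 2), ENNReal.ofReal_ofNat]
    simp only [heq]
    refine (ENNReal.continuous_ofReal.tendsto t).comp ?_
    -- real squeeze
    have hub : ∀ n : ℕ, (⌊t * 2 ^ n⌋₊ : ℝ) / 2 ^ n ≤ t := by
      intro n
      rw [div_le_iff₀ (by positivity)]
      exact Nat.floor_le (mul_nonneg ht.1 (by positivity))
    have hlb : ∀ n : ℕ, t - (2⁻¹ : ℝ) ^ n ≤ (⌊t * 2 ^ n⌋₊ : ℝ) / 2 ^ n := by
      intro n
      have h := (Nat.sub_one_lt_floor (t * 2 ^ n)).le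
      calc t - (2⁻¹:ℝ) ^ n = (t * 2 ^ n - 1) / 2 ^ n := by
            rw [inv_pow]
            field_simp
        _ ≤ (⌊t * 2 ^ n⌋₊ : ℝ) / 2 ^ n := by gcongr
    refine tendsto_of_tendsto_of_tendsto_of_le_of_le ?_ tendsto_const_nhds hlb hub
    have : Tendsto (fun n : ℕ => (2⁻¹ : ℝ) ^ n) atTop (nhds 0) :=
      tendsto_pow_atTop_nhds_zero_of_lt_one (by norm_num) (by norm_num)
    simpa using tendsto_const_nhds.sub this

end Aux

/-- `L⁰(Ω,S)` with the topology of convergence in probability is path-connected: any two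
random variables are joined by a Ky Fan continuous path of random variables. -/
theorem stmt16 {Ω S : Type*} [MeasurableSpace Ω] [MeasurableSpace S] [MetricSpace S]
    [BorelSpace S] [CompleteSpace S] [TopologicalSpace.SeparableSpace S]
    (P : Measure Ω) [IsProbabilityMeasure P] (hna : Nonatomic P)
    (X Y : Ω → S) (hX : Measurable X) (hY : Measurable Y) :
    ∃ γ : ℝ → Ω → S,
      (∀ t ∈ Set.Icc (0 : ℝ) 1, Measurable (γ t)) ∧
      KyFanContinuousOn P γ (Set.Icc 0 1) ∧
      γ 0 = X ∧ γ 1 = Y := by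
  classical
  obtain ⟨A, hAm, hAmono, hA0, hA1, hAP⟩ := kfpMonotoneFamily P hna
  set c : ℝ → ℝ := fun t => max 0 (min 1 t) with hc
  have hcmem : ∀ t ∈ Set.Icc (0:ℝ) 1, c t = t := by
    intro t ht
    rw [hc]
    simp only
    rw [min_eq_right ht.2, max_eq_right ht.1]
  refine ⟨fun t => (A (c t)).piecewise Y X, ?_, ?_, ?_, ?_⟩
  · intro t _
    exact Measurable.piecewise (hAm _) hY hX
  · intro t ht ε hε
    refine ⟨ε / 2, by positivity, fun s hs hst => ?_⟩
    set mn := min s t with hmn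
    set mx := max s t with hmx
    have hmn0 : 0 ≤ mn := le_min hs.1 ht.1
    have hmnx : mn ≤ mx := min_le_max
    have hsub : {ω | ε / 2 ≤ dist ((A (c s)).piecewise Y X ω) ((A (c t)).piecewise Y X ω)}
        ⊆ A mx \ A mn := by
      intro ω hω
      by_contra hmem
      have heq : (A (c s)).piecewise Y X ω = (A (c t)).piecewise Y X ω := by
        rw [hcmem s hs, hcmem t ht]
        rcases not_and_or.mp (fun h => hmem ⟨h.1, h.2⟩) with h | h
        · -- ω ∉ A mx hence in neither
          have hns : ω ∉ A s := fun hh => h (hAmono s mx hs.1 (le_max_left s t) hh)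
          have hnt : ω ∉ A t := fun hh => h (hAmono t mx ht.1 (le_max_right s t) hh)
          rw [Set.piecewise_eq_of_notMem _ _ _ hns, Set.piecewise_eq_of_notMem _ _ _ hnt]
        · -- ω ∈ A mn hence in both
          have hωmn : ω ∈ A mn := not_not.mp h
          have hins : ω ∈ A s := hAmono mn s hmn0 (min_le_left s t) hωmn
          have hint : ω ∈ A t := hAmono mn t hmn0 (min_le_right s t) hωmn
          rw [Set.piecewise_eq_of_mem _ _ _ hins, Set.piecewise_eq_of_mem _ _ _ hint]
      rw [Set.mem_setOf_eq, heq, dist_self] at hω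
      linarith
    have hmxI : mx ∈ Set.Icc (0:ℝ) 1 := ⟨hmn0.trans hmnx, max_le hs.2 ht.2⟩
    have hmnI : mn ∈ Set.Icc (0:ℝ) 1 := ⟨hmn0, hmnx.trans hmxI.2⟩
    have hPd : P (A mx \ A mn) = ENNReal.ofReal (mx - mn) := by
      rw [measure_diff (hAmono mn mx hmn0 hmnx) (hAm mn).nullMeasurableSet (measure_ne_top P _),
        hAP mx hmxI, hAP mn hmnI, ← ENNReal.ofReal_sub _ hmn0]
    have hbound : (P {ω | ε / 2 ≤ dist ((A (c s)).piecewise Y X ω)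
        ((A (c t)).piecewise Y X ω)}).toReal ≤ ε / 2 := by
      have h1 : P _ ≤ P (A mx \ A mn) := measure_mono hsub
      have h2 : (P (A mx \ A mn)).toReal = mx - mn := by
        rw [hPd, ENNReal.toReal_ofReal (by linarith [hmnx])]
      have h3 := ENNReal.toReal_mono (by rw [hPd]; exact ENNReal.ofReal_ne_top) h1
      rw [h2] at h3
      have h4 : mx - mn = |s - t| := by
        rw [hmx, hmn, max_sub_min_eq_abs]
        exact abs_sub_comm t s
      linarith [h3, h4 ▸ h3, hst, (h4 ▸ h3 : _ ≤ |s - t|)]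
    have hmem2 : ε / 2 ∈ {e : ℝ | 0 < e ∧
        (P {ω | e ≤ dist ((A (c s)).piecewise Y X ω) ((A (c t)).piecewise Y X ω)}).toReal ≤ e} :=
      ⟨by positivity, hbound⟩
    calc kyFanDist P ((A (c s)).piecewise Y X) ((A (c t)).piecewise Y X)
        ≤ ε / 2 := csInf_le ⟨0, fun x hx => hx.1.le⟩ hmem2
      _ < ε := by linarith
  · have h0 : c 0 = 0 := by norm_num [hc]
    show (A (c 0)).piecewise Y X = X
    rw [h0, hA0]
    funext ω
    simp [Set.piecewise]
  · have h1 : c 1 = 1 := by norm_num [hc]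
    show (A (c 1)).piecewise Y X = Y
    rw [h1, hA1]
    funext ω
    simp [Set.piecewise]
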